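/- Let s ≥ 1 and let p_i(u) = α_{i0} + α_{i1} u1^s + α_{i2} u2^s for i = 1, 2 with all α_{ij} > 0 satisfying α11·α22 ≥ (1 − 1/s)·α12·α21. Let A(u) = ((p1 + u1 ∂1 p1, u1 ∂2 p1), (u2 ∂1 p2, p2 + u2 ∂2 p2)) and H(u) = diag(s α21 u1^{s−2}, s α12 u2^{s−2}). Then for all u ∈ (0,∞)² and z ∈ ℝ²: zᵀ H(u) A(u) z ≥ (α10 + α11 u1^s)/u1 · s α21 u1^{s−1} · z1² + (α20 + α22 u2^s)/u2 · s α12 u2^{s−1} · z2² > 0 for z ≠ 0; in particular H(u)A(u) is positive definite on (0,∞)². -/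

import Mathlib

open Matrix Real

set_option maxHeartbeats 1000000

lemma quad_nonneg' (A B C x y : ℝ) (hA : 0 < A) (h : C^2 ≤ A*B) :
    0 ≤ A*x^2 + 2*C*(x*y) + B*y^2 := by
  nlinarith [sq_nonneg (A*x + C*y), mul_nonneg (sub_nonneg.2 h) (sq_nonneg y)]

lemma key15 (s α10 α20 α11 α12 α21 α22 u1 u2 c1 c2 z1 z2 : ℝ) (hs : 1 ≤ s)
    (h10 : 0 < α10) (h20 : 0 < α20) (h11 : 0 < α11) (h12 : 0 < α12)
    (h21 : 0 < α21) (h22 : 0 < α22) (hu1 : 0 < u1) (hu2 : 0 < u2)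
    (hc1 : 0 < c1) (hc2 : 0 < c2)
    (hcross : (s-1)*(α12*α21) ≤ s*(α11*α22)) :
    (α10 + α11*(c1*u1*u1)) * (s*α21*c1) * z1^2
      + (α20 + α22*(c2*u2*u2)) * (s*α12*c2) * z2^2
    ≤ (s*α21*c1)*((α10 + α11*(c1*u1*u1) + α12*(c2*u2*u2)) + u1*(s*α11*(c1*u1)))*z1^2
      + ((s*α21*c1)*(u1*(s*α12*(c2*u2))) + (s*α12*c2)*(u2*(s*α21*(c1*u1))))*(z1*z2)
      + (s*α12*c2)*((α20 + α21*(c1*u1*u1) + α22*(c2*u2*u2)) + u2*(s*α22*(c2*u2)))*z2^2 := by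
  have hs0 : 0 < s := by linarith
  set X := c1*u1^2 with hX'
  set Y := c2*u2^2 with hY'
  have hX : 0 < X := by positivity
  have hY : 0 < Y := by positivity
  -- discriminant inequality
  have hdiscr : (s^2*α12*α21*X*Y)^2 ≤
      (s*α21*(α12*Y + s*α11*X)*X) * (s*α12*(α21*X + s*α22*Y)*Y) := by
    have hbracket : s^2*(α12*α21)*X*Y ≤ (α12*α21)*X*Y + s*(α11*α21)*X^2
        + s*(α12*α22)*Y^2 + s^2*(α11*α22)*X*Y := by
      have hs1 : (0:ℝ) ≤ s - 1 := by linarith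
      have hstep3 : (s-1)*(α12*α21)*(X*Y) ≤ s*(α11*α21)*X^2 + s*(α12*α22)*Y^2 := by
        have hkey : (0:ℝ) < 2*s*(α11*α21) := by positivity
        rw [← mul_le_mul_iff_of_pos_left hkey]
        have h1 : 0 ≤ (s*(α11*α22) - (s-1)*(α12*α21)) * ((s-1) * ((α12*α21) * Y^2)) :=
          mul_nonneg (sub_nonneg.2 hcross) (mul_nonneg hs1 (by positivity))
        nlinarith [sq_nonneg (s*(α11*α21)*X - (s-1)*(α12*α21)*Y),
          mul_pos (mul_pos (mul_pos hs0 hs0) (mul_pos (mul_pos h11 h22) (mul_pos h12 h21))) (mul_pos hY hY),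
          mul_pos (mul_pos hs0 (mul_pos (mul_pos h11 h22) (mul_pos h12 h21))) (mul_pos hY hY)]
      have h2 : 0 ≤ (s*(α11*α22) - (s-1)*(α12*α21)) * (s * (X*Y)) :=
        mul_nonneg (sub_nonneg.2 hcross) (by positivity)
      nlinarith [hstep3, mul_pos (mul_pos hX hY) (mul_pos h12 h21)]
    nlinarith [mul_nonneg (by positivity : (0:ℝ) ≤ s^2*(α12*α21)*X*Y)
      (sub_nonneg.2 hbracket)]
  -- quadratic form nonnegativity for the difference
  have hA' : 0 < s*α21*c1*(α12*(c2*u2^2) + s*α11*(c1*u1^2)) := by positivity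
  have hCsq : (s^2*α12*α21*(c1*c2*u1*u2))^2 ≤
      (s*α21*c1*(α12*(c2*u2^2) + s*α11*(c1*u1^2))) *
      (s*α12*c2*(α21*(c1*u1^2) + s*α22*(c2*u2^2))) := by
    have hu : (0:ℝ) < (u1*u2)^2 := by positivity
    have := hdiscr
    rw [hX', hY'] at this
    nlinarith [this, hu]
  have hD := quad_nonneg' _ _ _ z1 z2 hA' hCsq
  nlinarith [hD]

/-- Positive definiteness of `H(u) A(u)` for the power-law population model
`p_i(u) = α_{i0} + α_{i1} u1^s + α_{i2} u2^s` with `α11 α22 ≥ (1 − 1/s) α12 α21`. -/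
theorem stmt15 (s : ℝ) (hs : 1 ≤ s)
    (α10 α20 α11 α12 α21 α22 : ℝ)
    (h10 : 0 < α10) (h20 : 0 < α20) (h11 : 0 < α11) (h12 : 0 < α12)
    (h21 : 0 < α21) (h22 : 0 < α22)
    (hcross : (1 - 1 / s) * α12 * α21 ≤ α11 * α22)
    (u1 u2 : ℝ) (hu1 : 0 < u1) (hu2 : 0 < u2)
    (H A : Matrix (Fin 2) (Fin 2) ℝ)
    (hH : H = !![s * α21 * u1 ^ (s - 2), 0; 0, s * α12 * u2 ^ (s - 2)])
    (hA : A = !![(α10 + α11 * u1 ^ s + α12 * u2 ^ s) + u1 * (s * α11 * u1 ^ (s - 1)),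
                 u1 * (s * α12 * u2 ^ (s - 1));
                 u2 * (s * α21 * u1 ^ (s - 1)),
                 (α20 + α21 * u1 ^ s + α22 * u2 ^ s) + u2 * (s * α22 * u2 ^ (s - 1))]) :
    (∀ z1 z2 : ℝ,
      ((α10 + α11 * u1 ^ s) / u1) * (s * α21 * u1 ^ (s - 1)) * z1 ^ 2
        + ((α20 + α22 * u2 ^ s) / u2) * (s * α12 * u2 ^ (s - 1)) * z2 ^ 2
      ≤ ![z1, z2] ⬝ᵥ ((H * A) *ᵥ ![z1, z2])) ∧
    ∀ z : Fin 2 → ℝ, z ≠ 0 → 0 < z ⬝ᵥ ((H * A) *ᵥ z) := by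
  subst hH hA
  have part1 : ∀ z1 z2 : ℝ,
      ((α10 + α11 * u1 ^ s) / u1) * (s * α21 * u1 ^ (s - 1)) * z1 ^ 2
        + ((α20 + α22 * u2 ^ s) / u2) * (s * α12 * u2 ^ (s - 1)) * z2 ^ 2
      ≤ ![z1, z2] ⬝ᵥ (((!![s * α21 * u1 ^ (s - 2), 0; 0, s * α12 * u2 ^ (s - 2)]) *
          (!![(α10 + α11 * u1 ^ s + α12 * u2 ^ s) + u1 * (s * α11 * u1 ^ (s - 1)),
                 u1 * (s * α12 * u2 ^ (s - 1));
                 u2 * (s * α21 * u1 ^ (s - 1)),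
                 (α20 + α21 * u1 ^ s + α22 * u2 ^ s) + u2 * (s * α22 * u2 ^ (s - 1))])) *ᵥ
          ![z1, z2]) := by
    intro z1 z2
    have e1 : u1 ^ (s-1) = u1 ^ (s-2) * u1 := by
      have h := Real.rpow_add hu1 (s-2) 1
      rw [show s-2+1 = s-1 by ring, Real.rpow_one] at h; exact h
    have e2 : u2 ^ (s-1) = u2 ^ (s-2) * u2 := by
      have h := Real.rpow_add hu2 (s-2) 1
      rw [show s-2+1 = s-1 by ring, Real.rpow_one] at h; exact h
    have f1 : u1 ^ s = u1 ^ (s-2) * u1 * u1 := by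
      have h := Real.rpow_add hu1 (s-2) 2
      rw [show s-2+2 = s by ring, show (2:ℝ) = ((2:ℕ):ℝ) by norm_num, Real.rpow_natCast] at h
      rw [h]; ring
    have f2 : u2 ^ s = u2 ^ (s-2) * u2 * u2 := by
      have h := Real.rpow_add hu2 (s-2) 2
      rw [show s-2+2 = s by ring, show (2:ℝ) = ((2:ℕ):ℝ) by norm_num, Real.rpow_natCast] at h
      rw [h]; ring
    simp only [Matrix.mul_fin_two, Matrix.mulVec, dotProduct, Fin.sum_univ_two,
      Matrix.cons_val', Matrix.cons_val_zero, Matrix.cons_val_one, Matrix.head_cons,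
      Matrix.empty_val', Matrix.cons_val_fin_one, Matrix.head_fin_const,
      Matrix.of_apply, Matrix.cons_val_one]
    rw [e1, e2, f1, f2]
    have hs0 : (0:ℝ) < s := lt_of_lt_of_le one_pos hs
    have hcross' : (s-1)*(α12*α21) ≤ s*(α11*α22) := by
      have e : s*((1-1/s)*α12*α21) = (s-1)*(α12*α21) := by field_simp
      nlinarith [mul_le_mul_of_nonneg_left (show (1 - 1/s) * α12 * α21 ≤ α11*α22 from hcross) hs0.le, e]
    have hc1 : 0 < u1 ^ (s-2) := Real.rpow_pos_of_pos hu1 _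
    have hc2 : 0 < u2 ^ (s-2) := Real.rpow_pos_of_pos hu2 _
    have d1 : (α10 + α11 * (u1 ^ (s - 2) * u1 * u1)) / u1 * (s * α21 * (u1 ^ (s - 2) * u1))
        = (α10 + α11 * (u1 ^ (s - 2) * u1 * u1)) * (s * α21 * u1 ^ (s - 2)) := by
      field_simp
    have d2 : (α20 + α22 * (u2 ^ (s - 2) * u2 * u2)) / u2 * (s * α12 * (u2 ^ (s - 2) * u2))
        = (α20 + α22 * (u2 ^ (s - 2) * u2 * u2)) * (s * α12 * u2 ^ (s - 2)) := by
      field_simp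
    rw [d1, d2]
    nlinarith [key15 s α10 α20 α11 α12 α21 α22 u1 u2 (u1^(s-2)) (u2^(s-2)) z1 z2 hs
      h10 h20 h11 h12 h21 h22 hu1 hu2 hc1 hc2 hcross']
  refine ⟨part1, ?_⟩
  intro z hz
  have hzv : ![z 0, z 1] = z := by
    funext i; fin_cases i <;> rfl
  rw [← hzv]
  have hP1 : 0 < ((α10 + α11 * u1 ^ s) / u1) * (s * α21 * u1 ^ (s - 1)) := by
    have hs0 : (0:ℝ) < s := lt_of_lt_of_le one_pos hs
    have := Real.rpow_pos_of_pos hu1 s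
    have := Real.rpow_pos_of_pos hu1 (s-1)
    positivity
  have hP2 : 0 < ((α20 + α22 * u2 ^ s) / u2) * (s * α12 * u2 ^ (s - 1)) := by
    have hs0 : (0:ℝ) < s := lt_of_lt_of_le one_pos hs
    have := Real.rpow_pos_of_pos hu2 s
    have := Real.rpow_pos_of_pos hu2 (s-1)
    positivity
  have hz' : z 0 ≠ 0 ∨ z 1 ≠ 0 := by
    by_contra h
    push_neg at h
    exact hz (by funext i; fin_cases i <;> simp [h.1, h.2])
  have hT : 0 < ((α10 + α11 * u1 ^ s) / u1) * (s * α21 * u1 ^ (s - 1)) * (z 0) ^ 2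
      + ((α20 + α22 * u2 ^ s) / u2) * (s * α12 * u2 ^ (s - 1)) * (z 1) ^ 2 := by
    rcases hz' with h | h
    · have h1 : 0 < (z 0)^2 := by positivity
      nlinarith [mul_pos hP1 h1, mul_nonneg hP2.le (sq_nonneg (z 1))]
    · have h1 : 0 < (z 1)^2 := by positivity
      nlinarith [mul_pos hP2 h1, mul_nonneg hP1.le (sq_nonneg (z 0))]
  exact lt_of_lt_of_le hT (part1 (z 0) (z 1))
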